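/- Let P be a finite set of positive integers with m = min P, Q = {p - m : p ∈ P, p ≠ m} ∪ {m}, and k ≥ 0. If i, j ∈ {0,…,k+m-1} are distinct and i ∼_{P,k+m} j via a period p ∈ P (i.e., |i - j| ∈ P, not merely congruence mod m), then |i - j| ≥ m, and both min{i,j} and max{i,j} - m lie in {0,…,k-1} and satisfy (max{i,j} - m) ∼_{Q,k} min{i,j}. -/
import Mathlib


/-- minimum of a finite set of naturals (as `sInf`). -/
noncomputable def mP (P : Finset ℕ) : ℕ := sInf (↑P : Set ℕ)

/-- the generating relation `∼_{P,k}` on `{0,…,k-1}`. -/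
def simRel (P : Finset ℕ) (k i j : ℕ) : Prop :=
  i < k ∧ j < k ∧ (i % mP P = j % mP P ∨
    ∃ i' j', i' < k ∧ j' < k ∧ i' % mP P = i % mP P ∧ j' % mP P = j % mP P ∧
      (max i' j' - min i' j') ∈ P)

/-- the class of `i` under the equivalence closure `≈_{P,k}`. -/
def cls (P : Finset ℕ) (k i : ℕ) : Set ℕ := {j | Relation.EqvGen (simRel P k) i j}

/-- the FW-word: `FW P k i = min [i]_{P,k}`. -/
noncomputable def FW (P : Finset ℕ) (k : ℕ) : ℕ → ℕ := fun i => sInf (cls P k i)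

/-- Euclidean reduction `Q = {p - m : p ∈ P, p ≠ m} ∪ {m}`. -/
noncomputable def Qred (P : Finset ℕ) : Finset ℕ :=
  ((P.erase (mP P)).image (fun p => p - mP P)) ∪ {mP P}

/-- `p` is a period of the word `w` of length `n`. -/
def HasPeriodF {A : Type*} (w : ℕ → A) (n p : ℕ) : Prop :=
  ∀ i, i + p < n → w i = w (i + p)

theorem stmt3 (P : Finset ℕ) (hP : P.Nonempty) (hpos : ∀ p ∈ P, 0 < p)
    (k i j : ℕ) (hi : i < k + mP P) (hj : j < k + mP P) (hne : i ≠ j)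
    (hp : (max i j - min i j) ∈ P) :
    mP P ≤ max i j - min i j ∧ min i j < k ∧ max i j - mP P < k ∧
      simRel (Qred P) k (max i j - mP P) (min i j) := by
  set m := mP P with hm
  have hd : m ≤ max i j - min i j := Nat.sInf_le (by exact_mod_cast hp)
  have hmin : min i j ≤ max i j := min_le_max
  have hmaxlt : max i j < k + m := max_lt hi hj
  have hminmax : min i j + (max i j - min i j) = max i j := Nat.add_sub_cancel' hmin
  have h1 : min i j < k := by omega
  have h2 : max i j - m < k := by omega
  refine ⟨hd, h1, h2, h2, h1, ?_⟩
  rcases eq_or_lt_of_le hd with heq | hlt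
  · left
    have : max i j - m = min i j := by omega
    rw [this]
  · right
    refine ⟨max i j - m, min i j, h2, h1, rfl, rfl, ?_⟩
    have hle : min i j ≤ max i j - m := by omega
    rw [max_eq_left hle, min_eq_right hle]
    have heq2 : max i j - m - min i j = (max i j - min i j) - m := by omega
    rw [heq2, Qred]
    apply Finset.mem_union_left
    exact Finset.mem_image.mpr ⟨max i j - min i j, Finset.mem_erase.mpr ⟨by omega, hp⟩, rfl⟩
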